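/- Let Γ be a group, r : Γ →* GL (Fin 2) ℂ a 2-dimensional complex representation, and η : Γ →* ℂˣ a character. Assume that the character det∘r : γ ↦ det(r(γ)) is not equal to η, that there exists an η-similitude form for r, and that det∘r and η both have order 2 (each is nontrivial with trivial square). Then there exists a 1-similitude form for r (a nondegenerate bilinear form B₀ with B₀(r(γ)v, r(γ)w) = B₀(v, w) for all γ, v, w; equivalently, the representation is self-dual) if and only if the range of r is isomorphic, as a group, to DihedralGroup 4 (the dihedral group of order 8). -/

import Mathlib

open Matrix

/-- A nondegenerate bilinear form on `Fin 2 → ℂ`. -/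
def Nondeg (B : (Fin 2 → ℂ) →ₗ[ℂ] (Fin 2 → ℂ) →ₗ[ℂ] ℂ) : Prop :=
  (∀ v, (∀ w, B v w = 0) → v = 0) ∧ (∀ w, (∀ v, B v w = 0) → w = 0)

/-- A `χ`-similitude form for `r`: a nondegenerate bilinear form scaled by `χ(γ)` under
the action of each `γ`. -/
def IsSimForm {Γ : Type*} [Group Γ] (r : Γ →* GL (Fin 2) ℂ) (χ : Γ →* ℂˣ)
    (B : (Fin 2 → ℂ) →ₗ[ℂ] (Fin 2 → ℂ) →ₗ[ℂ] ℂ) : Prop :=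
  Nondeg B ∧ ∀ (γ : Γ) (v w : Fin 2 → ℂ),
    B ((r γ : Matrix (Fin 2) (Fin 2) ℂ).mulVec v) ((r γ : Matrix (Fin 2) (Fin 2) ℂ).mulVec w) =
      (χ γ : ℂ) * B v w

namespace SDAux
noncomputable section

abbrev Mat := Matrix (Fin 2) (Fin 2) ℂ

def J : Mat := !![0,1;-1,0]

lemma ch (X : Mat) : X*X = X.trace • X - X.det • 1 := by
  ext i j
  fin_cases i <;> fin_cases j <;>
    simp [Matrix.mul_apply, Fin.sum_univ_two, Matrix.trace_fin_two, Matrix.det_fin_two,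
      Matrix.one_apply] <;> ring

lemma polar (X Y : Mat) : X*Y + Y*X
    = X.trace • Y + Y.trace • X + ((X*Y).trace - X.trace*Y.trace) • 1 := by
  ext i j
  fin_cases i <;> fin_cases j <;>
    simp [Matrix.mul_apply, Fin.sum_univ_two, Matrix.trace_fin_two, Matrix.one_apply] <;> ring

lemma conjJ (A : Mat) : A * J * Aᵀ = A.det • J := by
  ext i j
  fin_cases i <;> fin_cases j <;>
    simp [J, Matrix.mul_apply, Fin.sum_univ_two, Matrix.det_fin_two] <;> ring

lemma conjJ' (A : Mat) : Aᵀ * J * A = A.det • J := by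
  have := conjJ Aᵀ
  rwa [Matrix.transpose_transpose, Matrix.det_transpose] at this

lemma smul_one_inj {x y : ℂ} (h : x • (1 : Mat) = y • 1) : x = y := by
  have := congrFun (congrFun h 0) 0
  simpa using this

lemma pm1 {x : ℂ} (h : x^2 = 1) : x = 1 ∨ x = -1 := by
  have h0 : (x - 1) * (x + 1) = 0 := by linear_combination h
  rcases mul_eq_zero.1 h0 with h1 | h1
  · left; have := sub_eq_zero.1 h1; exact this
  · right; have := eq_neg_of_add_eq_zero_left h1; exact this

lemma intertwine (M R : Mat) (u : ℂ) (hd2 : R.det ^ 2 = 1)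
    (hM : Rᵀ * M * R = u • M) :
    (J * M) * R = (u * R.det) • (R * (J * M)) := by
  have hM' : Rᵀ * (M * R) = u • M := by rw [← Matrix.mul_assoc]; exact hM
  have e1 : R * (J * (Rᵀ * (M * R))) = u • (R * (J * M)) := by
    rw [hM', Matrix.mul_smul, Matrix.mul_smul]
  have e2 : R * (J * (Rᵀ * (M * R))) = R.det • (J * (M * R)) := by
    calc R * (J * (Rᵀ * (M * R))) = (R * J * Rᵀ) * (M * R) := by
          simp only [Matrix.mul_assoc]
      _ = (R.det • J) * (M * R) := by rw [conjJ]
      _ = R.det • (J * (M * R)) := by rw [Matrix.smul_mul]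
  have e3 : R.det • (J * (M * R)) = u • (R * (J * M)) := by rw [← e2, e1]
  have e4 : (R.det * R.det) • (J * (M * R)) = (u * R.det) • (R * (J * M)) := by
    rw [← smul_smul, e3, smul_smul, mul_comm]
  have hdd : R.det * R.det = 1 := by rw [← sq]; exact hd2
  rw [hdd, one_smul] at e4
  rw [Matrix.mul_assoc]; exact e4

section core
variable {S T : Mat} (hS2 : S*S = 1) (hT2 : T*T = 1) (hST : S*T = -(T*S))

lemma one_entry_ne : (1 : Mat) ≠ 0 := by
  intro h
  have := congrFun (congrFun h 0) 0
  simp [Matrix.one_apply] at this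

include hS2 hT2 hST in
lemma S_ne_smul_T (c : ℂ) : S ≠ c • T := by
  intro h
  have h1 : c • (1:Mat) = -(c • 1) := by
    calc c • (1:Mat) = c • (T*T) := by rw [hT2]
      _ = S * T := by rw [h, Matrix.smul_mul]
      _ = -(T*S) := hST
      _ = -(c • (T*T)) := by rw [h, Matrix.mul_smul]
      _ = -(c • 1) := by rw [hT2]
  have h3 : (c + c) • (1:Mat) = 0 := by
    rw [add_smul]; rw [eq_neg_iff_add_eq_zero] at h1; exact h1
  have h5 : c + c = 0 := by
    apply smul_one_inj; rw [h3, zero_smul]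
  have hc : c = 0 := by
    have := add_self_eq_zero.1 h5; exact this
  rw [hc, zero_smul] at h
  rw [h, Matrix.zero_mul] at hS2
  exact one_entry_ne hS2.symm

include hS2 hT2 hST in
lemma S_ne_smul_one (c : ℂ) : S ≠ c • 1 := by
  intro h
  have h1 : c • T = -(c • T) := by
    calc c • T = S * T := by rw [h, Matrix.smul_mul, one_mul]
      _ = -(T*S) := hST
      _ = -(c • T) := by rw [h, Matrix.mul_smul, mul_one]
  have h3 : (c + c) • T = 0 := by
    rw [add_smul]; rw [eq_neg_iff_add_eq_zero] at h1; exact h1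
  have h4 : (c + c) • (1:Mat) = 0 := by
    rw [← hT2, ← Matrix.smul_mul, h3, Matrix.zero_mul]
  have hc : c = 0 := add_self_eq_zero.1 (smul_one_inj (by rw [h4, zero_smul]))
  rw [hc, zero_smul] at h
  rw [h, Matrix.zero_mul] at hS2
  exact one_entry_ne hS2.symm

include hS2 hT2 hST in
lemma T_ne_smul_one (c : ℂ) : T ≠ c • 1 := by
  have hST' : T*S = -(S*T) := by rw [hST, neg_neg]
  exact S_ne_smul_one hT2 hS2 hST' c

include hS2 hT2 hST in
lemma scalar_of_commutes (hTrS : S.trace = 0) (hTrT : T.trace = 0) (A : Mat)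
    (hAS : S*A = A*S) (hAT : T*A = A*T) : A = (A.trace/2) • 1 := by
  set c : ℂ := A.trace/2 with hc
  set A0 : Mat := A - c • 1 with hA0
  have htr1 : (1 : Mat).trace = 2 := by simp [Matrix.trace_one]
  have hTrA0 : A0.trace = 0 := by
    rw [hA0, Matrix.trace_sub, Matrix.trace_smul, htr1, hc]
    simp
  have key : ∀ X : Mat, X*X = 1 → X.trace = 0 → A0*X = X*A0 →
      A0 = ((A0*X).trace/2) • X := by
    intro X hX2 hXtr hcomm
    have hp := polar A0 X
    rw [hTrA0, hXtr, zero_smul, zero_smul, zero_add, zero_add, mul_zero, sub_zero] at hp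
    rw [← hcomm] at hp
    have h2 : (2:ℂ) • (A0*X) = (A0*X).trace • 1 := by
      rw [two_smul]; exact hp
    have h3 : A0*X = ((A0*X).trace/2) • 1 := by
      have h2' := congrArg (fun Y : Mat => (2⁻¹ : ℂ) • Y) h2
      simp only [smul_smul] at h2'
      norm_num at h2'
      exact h2'.trans (by congr 1; ring)
    calc A0 = A0 * (X*X) := by rw [hX2, mul_one]
      _ = (A0*X)*X := by rw [Matrix.mul_assoc]
      _ = (((A0*X).trace/2) • 1) * X := by rw [← h3]
      _ = ((A0*X).trace/2) • X := by rw [Matrix.smul_mul, one_mul]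
  have hA0S : A0*S = S*A0 := by
    rw [hA0, Matrix.sub_mul, Matrix.mul_sub, Matrix.smul_mul, Matrix.mul_smul, one_mul,
      mul_one, hAS]
  have hA0T : A0*T = T*A0 := by
    rw [hA0, Matrix.sub_mul, Matrix.mul_sub, Matrix.smul_mul, Matrix.mul_smul, one_mul,
      mul_one, hAT]
  have eS := key S hS2 hTrS hA0S
  have eT := key T hT2 hTrT hA0T
  have hA0_eq : A0 = 0 := by
    by_cases hzero : (A0*S).trace/2 = 0
    · rw [eS, hzero, zero_smul]
    · exfalso
      have hS_eq : S = (((A0*S).trace/2)⁻¹ * ((A0*T).trace/2)) • T := by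
        have := eS.symm.trans eT
        have := congrArg (fun Y => (((A0*S).trace/2)⁻¹ : ℂ) • Y) this
        simp only [smul_smul] at this
        rw [inv_mul_cancel₀ hzero, one_smul] at this
        exact this
      exact S_ne_smul_T hS2 hT2 hST _ hS_eq
  have : A - c • 1 = 0 := by rw [← hA0]; exact hA0_eq
  rw [sub_eq_zero] at this
  exact this

include hS2 hT2 hST in
lemma classify1m (hTrS : S.trace = 0) (hTrT : T.trace = 0) (A : Mat)
    (hAS : S*A = A*S) (hAT : T*A = -(A*T)) : ∃ μ : ℂ, A = μ • S := by
  set B : Mat := A*S with hB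
  have hBS : S*B = B*S := by
    rw [hB, ← Matrix.mul_assoc, hAS]
  have hBT : T*B = B*T := by
    have h1 : T*(A*S) = -((A*T)*S) := by
      rw [← Matrix.mul_assoc, hAT, Matrix.neg_mul]
    have h2 : (A*S)*T = -((A*T)*S) := by
      rw [Matrix.mul_assoc, hST, Matrix.mul_neg, Matrix.mul_assoc, ← Matrix.mul_assoc]
    rw [hB, h1, h2]
  have hB1 := scalar_of_commutes hS2 hT2 hST hTrS hTrT B hBS hBT
  refine ⟨B.trace/2, ?_⟩
  calc A = A*(S*S) := by rw [hS2, mul_one]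
    _ = B*S := by rw [hB, Matrix.mul_assoc]
    _ = ((B.trace/2) • 1)*S := by rw [← hB1]
    _ = (B.trace/2) • S := by rw [Matrix.smul_mul, one_mul]

include hS2 hT2 hST in
lemma classifym1 (hTrS : S.trace = 0) (hTrT : T.trace = 0) (A : Mat)
    (hAS : S*A = -(A*S)) (hAT : T*A = A*T) : ∃ μ : ℂ, A = μ • T := by
  have hST' : T*S = -(S*T) := by rw [hST, neg_neg]
  exact classify1m hT2 hS2 hST' hTrT hTrS A hAT hAS

include hS2 hT2 hST in
lemma classifymm (hTrS : S.trace = 0) (hTrT : T.trace = 0) (A : Mat)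
    (hAS : S*A = -(A*S)) (hAT : T*A = -(A*T)) : ∃ μ : ℂ, A = μ • (S*T) := by
  set B : Mat := A*(T*S) with hB
  have hSTS : S*(T*S) = -T := by
    calc S*(T*S) = (S*T)*S := by rw [Matrix.mul_assoc]
      _ = -((T*S)*S) := by rw [hST, Matrix.neg_mul]
      _ = -(T*(S*S)) := by rw [Matrix.mul_assoc]
      _ = -T := by rw [hS2, mul_one]
  have hBS : S*B = B*S := by
    have h1 : S*B = A*T := by
      calc S*(A*(T*S)) = (S*A)*(T*S) := by rw [Matrix.mul_assoc]
        _ = -((A*S)*(T*S)) := by rw [hAS, Matrix.neg_mul]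
        _ = -(A*(S*(T*S))) := by rw [Matrix.mul_assoc]
        _ = -(A*(-T)) := by rw [hSTS]
        _ = A*T := by rw [Matrix.mul_neg, neg_neg]
    have h2 : B*S = A*T := by
      calc (A*(T*S))*S = A*((T*S)*S) := by rw [Matrix.mul_assoc]
        _ = A*(T*(S*S)) := by rw [Matrix.mul_assoc]
        _ = A*T := by rw [hS2, mul_one]
    rw [hB, h1, h2]
  have hBT : T*B = B*T := by
    have h1 : T*B = -(A*S) := by
      calc T*(A*(T*S)) = (T*A)*(T*S) := by rw [Matrix.mul_assoc]
        _ = -((A*T)*(T*S)) := by rw [hAT, Matrix.neg_mul]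
        _ = -(A*(T*(T*S))) := by rw [Matrix.mul_assoc]
        _ = -(A*((T*T)*S)) := by rw [Matrix.mul_assoc]
        _ = -(A*S) := by rw [hT2, one_mul]
    have h2 : B*T = -(A*S) := by
      have hTST : (T*S)*T = -S := by
        calc (T*S)*T = T*(S*T) := by rw [Matrix.mul_assoc]
          _ = T*(-(T*S)) := by rw [hST]
          _ = -((T*T)*S) := by rw [Matrix.mul_neg, Matrix.mul_assoc]
          _ = -S := by rw [hT2, one_mul]
      calc (A*(T*S))*T = A*((T*S)*T) := by rw [Matrix.mul_assoc]
        _ = A*(-S) := by rw [hTST]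
        _ = -(A*S) := by rw [Matrix.mul_neg]
    rw [hB, h1, h2]
  have hB1 := scalar_of_commutes hS2 hT2 hST hTrS hTrT B hBS hBT
  have hTSST : (T*S)*(S*T) = 1 := by
    calc (T*S)*(S*T) = T*(S*(S*T)) := by rw [Matrix.mul_assoc]
      _ = T*((S*S)*T) := by rw [Matrix.mul_assoc]
      _ = T*T := by rw [hS2, one_mul]
      _ = 1 := hT2
  refine ⟨B.trace/2, ?_⟩
  calc A = A*((T*S)*(S*T)) := by rw [hTSST, mul_one]
    _ = B*(S*T) := by rw [hB, ← Matrix.mul_assoc]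
    _ = ((B.trace/2) • 1)*(S*T) := by rw [← hB1]
    _ = (B.trace/2) • (S*T) := by rw [Matrix.smul_mul, one_mul]

include hS2 in
lemma det_of_invol (hTrS : S.trace = 0) : S.det = -1 := by
  have h := ch S
  rw [hS2, hTrS, zero_smul, zero_sub] at h
  have h2 : (1:ℂ) • (1:Mat) = (-S.det) • 1 := by
    rw [one_smul]; exact h.trans (neg_smul _ _).symm
  have h3 := smul_one_inj h2
  linear_combination h3

end core

lemma pmI {x : ℂ} (h : x^2 = -1) : x = Complex.I ∨ x = -Complex.I := by
  have h0 : (x - Complex.I) * (x + Complex.I) = 0 := by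
    linear_combination h - Complex.I_sq
  rcases mul_eq_zero.1 h0 with h1 | h1
  · left; have := sub_eq_zero.1 h1; exact this
  · right; have := eq_neg_of_add_eq_zero_left h1; exact this

lemma trace_J_mul (M : Mat) (h : Mᵀ = M) : (J*M).trace = 0 := by
  have h01 : M 1 0 = M 0 1 := by
    have := congrFun (congrFun h 0) 1; simpa [Matrix.transpose_apply] using this
  simp [J, Matrix.trace_fin_two, Matrix.mul_apply, Fin.sum_univ_two, Matrix.vecMul,
    dotProduct, h01]

lemma skew_eq (M : Mat) : M - Mᵀ = (M 0 1 - M 1 0) • J := by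
  ext i j
  fin_cases i <;> fin_cases j <;> simp [J]

lemma detJ : J.det = 1 := by simp [J, Matrix.det_fin_two]

lemma normalize (M : Mat) (hdet : M.det ≠ 0) (hsym : Mᵀ = M) :
    ∃ (T : Mat) (e : ℂ), e ≠ 0 ∧ T = e • (J*M) ∧ T*T = 1 ∧ T.trace = 0 := by
  obtain ⟨z, hz⟩ := IsAlgClosed.exists_pow_nat_eq (-M.det) (n := 2) two_pos
  have hz0 : z ≠ 0 := by
    intro h; rw [h] at hz; simp at hz
    exact hdet hz
  have hdetJM : (J*M).det = M.det := by rw [Matrix.det_mul, detJ, one_mul]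
  have htr : (J*M).trace = 0 := trace_J_mul M hsym
  refine ⟨z⁻¹ • (J*M), z⁻¹, inv_ne_zero hz0, rfl, ?_, ?_⟩
  · have hsq : (J*M)*(J*M) = (-M.det) • 1 := by
      rw [ch (J*M), htr, hdetJM, zero_smul, zero_sub, neg_smul]
    rw [Matrix.smul_mul, Matrix.mul_smul, smul_smul, hsq, smul_smul, ← hz]
    have : z⁻¹ * z⁻¹ * z^2 = 1 := by field_simp
    rw [this, one_smul]
  · rw [Matrix.trace_smul, htr, smul_zero]

lemma skew_coeff (M R : Mat) (u : ℂ) (hM : Rᵀ*M*R = u•M) :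
    (M 0 1 - M 1 0) * R.det = u * (M 0 1 - M 1 0) := by
  have hMt : Rᵀ*Mᵀ*R = u•Mᵀ := by
    have h := congrArg Matrix.transpose hM
    rw [Matrix.transpose_mul, Matrix.transpose_mul, Matrix.transpose_transpose,
      Matrix.transpose_smul] at h
    rw [← Matrix.mul_assoc] at h
    exact h
  have hsub : Rᵀ*(M - Mᵀ)*R = u•(M - Mᵀ) := by
    rw [Matrix.mul_sub, Matrix.sub_mul, hM, hMt, smul_sub]
  rw [skew_eq] at hsub
  set c : ℂ := M 0 1 - M 1 0
  have hRJR : Rᵀ*J*R = R.det • J := by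
    have := conjJ Rᵀ
    rwa [Matrix.transpose_transpose, Matrix.det_transpose] at this
  have hJc : Rᵀ*(c • J)*R = (c * R.det) • J := by
    calc Rᵀ*(c • J)*R = c • (Rᵀ*J*R) := by rw [Matrix.mul_smul, Matrix.smul_mul]
      _ = c • (R.det • J) := by rw [hRJR]
      _ = (c * R.det) • J := by rw [smul_smul]
  rw [hJc, smul_smul] at hsub
  have := congrFun (congrFun hsub 0) 1
  simpa [J] using this

lemma quad_entry (R M : Mat) (i j : Fin 2) :
    (R *ᵥ Pi.single i 1) ⬝ᵥ (M *ᵥ (R *ᵥ Pi.single j 1)) = (Rᵀ * M * R) i j := by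
  simp [Matrix.mulVec, dotProduct, Matrix.mul_apply, Fin.sum_univ_two,
    Pi.single_apply, Matrix.transpose_apply]
  fin_cases i <;> fin_cases j <;> simp <;> ring

lemma single_entry (M : Mat) (i j : Fin 2) :
    (Pi.single i 1 : Fin 2 → ℂ) ⬝ᵥ (M *ᵥ Pi.single j 1) = M i j := by
  fin_cases i <;> fin_cases j <;>
    simp [Matrix.mulVec, dotProduct, Pi.single_apply, Fin.sum_univ_two]

variable {Γ : Type*} [Group Γ] (r : Γ →* GL (Fin 2) ℂ)

lemma exists_matrix_of_form (χ : Γ →* ℂˣ) (B) (hB : IsSimForm r χ B) :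
    ∃ M : Mat, M.det ≠ 0 ∧
      ∀ γ : Γ, ((r γ : Mat))ᵀ * M * (r γ : Mat) = (χ γ : ℂ) • M := by
  set M : Mat := Matrix.of fun i j => B (Pi.single i 1) (Pi.single j 1) with hM
  have hv : ∀ v : Fin 2 → ℂ, v = v 0 • (Pi.single 0 1 : Fin 2 → ℂ) + v 1 • (Pi.single 1 1 : Fin 2 → ℂ) := by
    intro v; ext i; fin_cases i <;> simp
  have hrep : ∀ v w, B v w = v ⬝ᵥ (M *ᵥ w) := by
    intro v w
    conv_lhs => rw [hv v, hv w]
    simp only [_root_.map_add, _root_.map_smul, LinearMap.add_apply, LinearMap.smul_apply, smul_eq_mul]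
    simp [hM, Matrix.mulVec, dotProduct, Fin.sum_univ_two]
    ring
  refine ⟨M, ?_, ?_⟩
  · intro h
    obtain ⟨w, hw0, hw⟩ := (Matrix.exists_mulVec_eq_zero_iff).2 h
    exact hw0 (hB.1.2 w (fun v => by rw [hrep, hw]; simp))
  · intro γ
    ext i j
    have h2 := hB.2 γ (Pi.single i 1) (Pi.single j 1)
    rw [hrep, hrep] at h2
    rw [quad_entry, single_entry] at h2
    simpa using h2

lemma form_of_matrix (N : Mat) (hdet : N.det ≠ 0)
    (hinv : ∀ γ : Γ, ((r γ : Mat))ᵀ * N * (r γ : Mat) = N) :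
    ∃ B, IsSimForm r (1 : Γ →* ℂˣ) B := by
  have hN : IsUnit N.det := isUnit_iff_ne_zero.2 hdet
  refine ⟨LinearMap.mk₂ ℂ (fun v w => v ⬝ᵥ (N *ᵥ w)) ?_ ?_ ?_ ?_, ⟨?_, ?_⟩, ?_⟩
  · intro x y w; simp [add_dotProduct]
  · intro c x w; simp [smul_dotProduct]
  · intro v x y; simp [Matrix.mulVec_add, dotProduct_add]; ring
  · intro c v w; simp [Matrix.mulVec_smul, dotProduct_smul]; ring
  · intro v hvw
    have h0 : v ᵥ* N = 0 := by
      funext j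
      have := hvw (Pi.single j 1)
      simp only [LinearMap.mk₂_apply, Matrix.dotProduct_mulVec] at this
      have h1 : (v ᵥ* N) ⬝ᵥ (Pi.single j 1 : Fin 2 → ℂ) = (v ᵥ* N) j := by
        fin_cases j <;> simp [dotProduct, Pi.single_apply, Fin.sum_univ_two]
      rw [h1] at this
      simpa using this
    have : v ᵥ* (N * N⁻¹) = 0 := by
      rw [← Matrix.vecMul_vecMul, h0]; simp
    rwa [Matrix.mul_nonsing_inv N hN, Matrix.vecMul_one] at this
  · intro w hvw
    have h0 : N *ᵥ w = 0 := by
      funext i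
      have := hvw (Pi.single i 1)
      simp only [LinearMap.mk₂_apply] at this
      have h1 : (Pi.single i 1 : Fin 2 → ℂ) ⬝ᵥ (N *ᵥ w) = (N *ᵥ w) i := by
        fin_cases i <;> simp [dotProduct, Pi.single_apply, Fin.sum_univ_two]
      rw [h1] at this
      simpa using this
    have : (N⁻¹ * N) *ᵥ w = 0 := by
      rw [← Matrix.mulVec_mulVec, h0]; simp
    rwa [Matrix.nonsing_inv_mul N hN, Matrix.one_mulVec] at this
  · intro γ v w
    simp only [LinearMap.mk₂_apply]
    have key : ((r γ : Mat) *ᵥ v) ⬝ᵥ (N *ᵥ ((r γ : Mat) *ᵥ w))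
        = v ⬝ᵥ ((((r γ : Mat))ᵀ * N * (r γ : Mat)) *ᵥ w) := by
      rw [Matrix.mulVec_mulVec, ← Matrix.vecMul_transpose, Matrix.dotProduct_mulVec,
        Matrix.vecMul_vecMul, ← Matrix.dotProduct_mulVec, ← Matrix.mul_assoc]
    rw [key, hinv γ]
    simp

-- converse pieces
section conv2
variable {Γ : Type*} [Group Γ] (r : Γ →* GL (Fin 2) ℂ)
lemma span_lemma (Z X : Mat) (hZ2 : Z*Z = 1) (htrZ : Z.trace = 0)
    (hcomm : X*Z = Z*X) : ∃ α β : ℂ, X = α•(1:Mat) + β•Z := by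
  set c : ℂ := X.trace/2 with hc
  set X0 : Mat := X - c•1 with hX0
  have htr1 : (1 : Mat).trace = 2 := by simp [Matrix.trace_one]
  have htrX0 : X0.trace = 0 := by
    rw [hX0, Matrix.trace_sub, Matrix.trace_smul, htr1, hc]; simp
  have hcomm0 : X0*Z = Z*X0 := by
    rw [hX0, Matrix.sub_mul, Matrix.mul_sub, Matrix.smul_mul, Matrix.mul_smul, one_mul,
      mul_one, hcomm]
  have hp := polar X0 Z
  rw [htrX0, htrZ, zero_smul, zero_smul, zero_add, zero_add, mul_zero, sub_zero] at hp
  rw [hcomm0] at hp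
  have h2 : (2:ℂ) • (Z*X0) = (Z*X0).trace • 1 := by rw [two_smul]; exact hp
  have h3 : Z*X0 = ((Z*X0).trace/2) • 1 := by
    have h2' := congrArg (fun Y : Mat => (2⁻¹ : ℂ) • Y) h2
    simp only [smul_smul] at h2'
    norm_num at h2'
    exact h2'.trans (by congr 1; ring)
  have hX0Z : X0 = ((Z*X0).trace/2) • Z := by
    calc X0 = (Z*Z)*X0 := by rw [hZ2, one_mul]
      _ = Z*(Z*X0) := by rw [Matrix.mul_assoc]
      _ = Z*(((Z*X0).trace/2) • 1) := congrArg (fun Y => Z*Y) h3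
      _ = ((Z*X0).trace/2) • Z := by rw [Matrix.mul_smul, mul_one]
  refine ⟨c, (Z*X0).trace/2, ?_⟩
  rw [← hX0Z, hX0]
  abel


def val2 (x : r.range) : Mat := ((x : GL (Fin 2) ℂ) : Mat)

lemma val2_mul (x y : r.range) : val2 r (x*y) = val2 r x * val2 r y := rfl

lemma val2_one : val2 r 1 = 1 := rfl

lemma val2_pow (x : r.range) (k : ℕ) : val2 r (x^k) = (val2 r x)^k := by
  induction k with
  | zero => simp [val2_one]
  | succ n ih => rw [pow_succ, pow_succ, val2_mul, ih]

lemma val2_inj {x y : r.range} (h : val2 r x = val2 r y) : x = y :=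
  Subtype.ext (Units.ext h)

set_option maxHeartbeats 1000000 in
lemma dihedral_invariant_form (e : r.range ≃* DihedralGroup 4) :
    ∃ N : Mat, N.det ≠ 0 ∧ ∀ γ : Γ, ((r γ : Mat))ᵀ * N * (r γ : Mat) = N := by
  classical
  set a : r.range := e.symm (DihedralGroup.r 1) with ha
  set b : r.range := e.symm (DihedralGroup.sr 0) with hb
  have ha4 : a^4 = 1 := by
    rw [ha, ← _root_.map_pow, show (DihedralGroup.r 1 : DihedralGroup 4)^4 = 1 by decide, _root_.map_one]
  have hb2 : b^2 = 1 := by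
    rw [hb, ← _root_.map_pow, show (DihedralGroup.sr 0 : DihedralGroup 4)^2 = 1 by decide, _root_.map_one]
  have ha2ne : a^2 ≠ 1 := by
    intro h
    rw [ha, ← _root_.map_pow, (_root_.map_one e.symm).symm] at h
    have := e.symm.injective h
    exact (by decide : ¬ ((DihedralGroup.r 1 : DihedralGroup 4)^2 = 1)) this
  have hzb : a^2 * b = b * a^2 := by
    rw [ha, hb, ← _root_.map_pow, ← _root_.map_mul, ← _root_.map_mul]
    exact congrArg e.symm (by decide)
  have hba : b * a * b = a⁻¹ := by
    rw [ha, hb, ← _root_.map_inv, ← _root_.map_mul, ← _root_.map_mul]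
    exact congrArg e.symm (by decide)
  have hne : a * b ≠ b * a := by
    intro h
    rw [ha, hb, ← _root_.map_mul, ← _root_.map_mul] at h
    exact (by decide : ¬((DihedralGroup.r 1:DihedralGroup 4) * .sr 0 = .sr 0 * .r 1))
      (e.symm.injective h)
  have hdecomp : ∀ x : r.range,
      (∃ k : ZMod 4, x = a^(k.val)) ∨ (∃ k : ZMod 4, x = b*a^(k.val)) := by
    intro x
    have hD := (by decide : ∀ y : DihedralGroup 4,
        (∃ k : ZMod 4, y = (DihedralGroup.r 1)^(k.val)) ∨
        (∃ k : ZMod 4, y = (DihedralGroup.sr 0) * (DihedralGroup.r 1)^k.val)) (e x)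
    rcases hD with ⟨k, hk⟩ | ⟨k, hk⟩
    · left
      exact ⟨k, by rw [ha, ← _root_.map_pow, ← hk, MulEquiv.symm_apply_apply]⟩
    · right
      exact ⟨k, by rw [ha, hb, ← _root_.map_pow, ← _root_.map_mul, ← hk, MulEquiv.symm_apply_apply]⟩
  set A : Mat := val2 r a with hA
  set B : Mat := val2 r b with hBm
  have hA4 : A^4 = 1 := by rw [hA, ← val2_pow, ha4, val2_one]
  have hB2 : B*B = 1 := by
    rw [hBm, ← pow_two, ← val2_pow, hb2, val2_one]
  set Z : Mat := A*A with hZ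
  have hZA2 : Z = A^2 := by rw [hZ, pow_two]
  have hZ2 : Z*Z = 1 := by
    rw [hZA2, ← pow_add]
    exact hA4
  have hZA : Z*A = A*Z := by rw [hZ, Matrix.mul_assoc]
  have hZB : B*Z = Z*B := by
    have h := congrArg (val2 r) hzb
    rw [val2_mul, val2_mul, val2_pow] at h
    rw [hZA2, hA, hBm]
    exact h.symm
  have hABBA : A*B ≠ B*A := by
    intro h
    exact hne (val2_inj r (by rw [val2_mul, val2_mul, ← hA, ← hBm, h]))
  -- Z = -1
  have hZval : Z = (-1 : ℂ) • 1 := by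
    by_cases htrZ : Z.trace = 0
    · exfalso
      obtain ⟨α, β, hAe⟩ := span_lemma Z A hZ2 htrZ hZA.symm
      obtain ⟨α', β', hBe⟩ := span_lemma Z B hZ2 htrZ hZB
      apply hABBA
      rw [hAe, hBe]
      simp only [Matrix.add_mul, Matrix.mul_add, Matrix.smul_mul, Matrix.mul_smul,
        one_mul, mul_one, smul_smul]
      module
    · have hch := ch Z
      rw [hZ2] at hch
      have h1 : Z.trace • Z = (1 + Z.det) • 1 := by
        have h0 := congrArg (fun X : Mat => X + Z.det • 1) hch
        simp only [sub_add_cancel] at h0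
        rw [add_smul, one_smul]
        exact h0.symm
      have hZs : Z = ((Z.trace)⁻¹ * (1 + Z.det)) • 1 := by
        have h2 := congrArg (fun X : Mat => (Z.trace)⁻¹ • X) h1
        simp only [smul_smul] at h2
        rw [inv_mul_cancel₀ htrZ, one_smul] at h2
        exact h2
      set lam : ℂ := (Z.trace)⁻¹ * (1 + Z.det) with hlam
      have hl2 : lam^2 = 1 := by
        have : (lam • (1:Mat)) * (lam • 1) = 1 := by rw [← hZs]; exact hZ2
        rw [Matrix.smul_mul, Matrix.mul_smul, one_mul, smul_smul] at this
        have := smul_one_inj (by rw [this, one_smul] : (lam*lam) • (1:Mat) = (1:ℂ) • 1)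
        rw [← sq] at this
        exact this
      rcases pm1 hl2 with hl | hl
      · exfalso
        apply ha2ne
        apply val2_inj r
        rw [val2_pow, val2_one, ← hA, ← hZA2, hZs, hl, one_smul]
      · rw [hZs, hl]
  -- trace and det facts
  have htrA : A.trace = 0 := by
    by_contra htrA
    apply hABBA
    have hch := ch A
    have hAA : A*A = Z := rfl
    rw [hAA, hZval] at hch
    have h1 : A.trace • A = (A.det - 1) • 1 := by
      have h0 := congrArg (fun X : Mat => X + A.det • 1) hch
      simp only [sub_add_cancel] at h0
      rw [sub_smul, one_smul]
      have : (-1 : ℂ) • (1:Mat) + A.det • 1 = A.det • 1 - 1 := by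
        rw [neg_smul, one_smul]; abel
      rw [← h0, this]
    have hAs : A = ((A.trace)⁻¹ * (A.det - 1)) • 1 := by
      have h2 := congrArg (fun X : Mat => (A.trace)⁻¹ • X) h1
      simp only [smul_smul] at h2
      rw [inv_mul_cancel₀ htrA, one_smul] at h2
      exact h2
    rw [hAs, Matrix.smul_mul, Matrix.mul_smul, one_mul, mul_one]
  have hdetA : A.det = 1 := by
    have hch := ch A
    have hAA : A*A = Z := rfl
    rw [hAA, hZval, htrA, zero_smul, zero_sub] at hch
    have : (-1 : ℂ) • (1:Mat) = (-A.det) • 1 := by rw [hch, neg_smul]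
    have := smul_one_inj this
    linear_combination this
  have htrB : B.trace = 0 := by
    by_contra htrB
    apply hABBA
    have hch := ch B
    rw [hB2] at hch
    have h1 : B.trace • B = (1 + B.det) • 1 := by
      have h0 := congrArg (fun X : Mat => X + B.det • 1) hch
      simp only [sub_add_cancel] at h0
      rw [add_smul, one_smul]
      exact h0.symm
    have hBs : B = ((B.trace)⁻¹ * (1 + B.det)) • 1 := by
      have h2 := congrArg (fun X : Mat => (B.trace)⁻¹ • X) h1
      simp only [smul_smul] at h2
      rw [inv_mul_cancel₀ htrB, one_smul] at h2
      exact h2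
    rw [hBs, Matrix.smul_mul, Matrix.mul_smul, one_mul, mul_one]
  have hdetB : B.det = -1 := by
    have hch := ch B
    rw [hB2, htrB, zero_smul, zero_sub] at hch
    have : (1:ℂ) • (1:Mat) = (-B.det) • 1 := by
      rw [one_smul]; exact hch.trans (neg_smul _ _).symm
    have := smul_one_inj this
    linear_combination this
  -- anticommutation
  have ha3 : a⁻¹ = a^3 := by
    apply inv_eq_of_mul_eq_one_right
    rw [← pow_succ']
    exact ha4
  have hBAB : B*A*B = -A := by
    have h := congrArg (val2 r) hba
    rw [ha3] at h
    rw [val2_mul, val2_mul, val2_pow, ← hA, ← hBm] at h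
    have hA3 : A^3 = -A := by
      have : A^3 = A*(A*A) := by rw [pow_succ, pow_two, Matrix.mul_assoc]
      rw [this, ← hZ, hZval, Matrix.mul_smul, mul_one, neg_smul, one_smul]
    rw [h, hA3]
  have hBA : B*A = -(A*B) := by
    have h1 : (B*A*B)*B = B*A := by
      rw [Matrix.mul_assoc, hB2, mul_one]
    rw [← h1, hBAB, Matrix.neg_mul]
  -- the invariant form
  refine ⟨J*A, ?_, ?_⟩
  · rw [Matrix.det_mul, detJ, hdetA, one_mul]
    exact one_ne_zero
  · intro γ
    set x : r.range := ⟨r γ, ⟨γ, rfl⟩⟩ with hx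
    have hval : (r γ : Mat) = val2 r x := rfl
    have keyc : ∀ R : Mat, A*R = R*A → R.det = 1 → Rᵀ * (J*A) * R = J*A := by
      intro R hcomm hdet
      calc Rᵀ * (J*A) * R = Rᵀ * (J*(A*R)) := by rw [Matrix.mul_assoc, Matrix.mul_assoc]
        _ = Rᵀ * (J*(R*A)) := by rw [hcomm]
        _ = (Rᵀ * J * R) * A := by simp only [Matrix.mul_assoc]
        _ = (R.det • J) * A := by rw [conjJ']
        _ = J*A := by rw [hdet, one_smul]
    have keya : ∀ R : Mat, A*R = -(R*A) → R.det = -1 → Rᵀ * (J*A) * R = J*A := by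
      intro R hcomm hdet
      calc Rᵀ * (J*A) * R = Rᵀ * (J*(A*R)) := by rw [Matrix.mul_assoc, Matrix.mul_assoc]
        _ = -(Rᵀ * (J*(R*A))) := by rw [hcomm, Matrix.mul_neg, Matrix.mul_neg]
        _ = -((Rᵀ * J * R) * A) := by simp only [Matrix.mul_assoc]
        _ = -((R.det • J) * A) := by rw [conjJ']
        _ = J*A := by rw [hdet, neg_smul, one_smul, Matrix.neg_mul, neg_neg]
    rcases hdecomp x with ⟨k, hk⟩ | ⟨k, hk⟩
    · have hR : (r γ : Mat) = A^(k.val) := by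
        rw [hval, hk, val2_pow, ← hA]
      rw [hR]
      apply keyc
      · exact ((Commute.refl A).pow_right k.val).eq
      · rw [Matrix.det_pow, hdetA, one_pow]
    · have hR : (r γ : Mat) = B*A^(k.val) := by
        rw [hval, hk, val2_mul, val2_pow, ← hA, ← hBm]
      rw [hR]
      apply keya
      · have hAB : A*B = -(B*A) := by rw [hBA, neg_neg]
        calc A*(B*A^(k.val)) = (A*B)*A^(k.val) := by rw [Matrix.mul_assoc]
          _ = -((B*A)*A^(k.val)) := by rw [hAB, Matrix.neg_mul]
          _ = -(B*(A*A^(k.val))) := by rw [Matrix.mul_assoc]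
          _ = -(B*(A^(k.val)*A)) := by rw [((Commute.refl A).pow_right k.val).eq]
          _ = -((B*A^(k.val))*A) := by rw [Matrix.mul_assoc]
      · rw [Matrix.det_mul, Matrix.det_pow, hdetA, one_pow, hdetB, mul_one]

end conv2

section fwd
variable {Γ : Type*} [Group Γ]

set_option maxHeartbeats 1600000 in
lemma forward (r : Γ →* GL (Fin 2) ℂ) (η : Γ →* ℂˣ)
    (hdetne : ∃ γ : Γ, ((r γ : Mat)).det ≠ (η γ : ℂ))
    (hdet2 : ∀ γ : Γ, ((r γ : Mat)).det ^ 2 = 1)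
    (hdetnt : ∃ γ : Γ, ((r γ : Mat)).det ≠ 1)
    (hηnt : ∃ γ : Γ, η γ ≠ 1)
    (hη2 : ∀ γ : Γ, η γ * η γ = 1)
    (M : Mat) (hMdet : M.det ≠ 0)
    (hMrel : ∀ γ, ((r γ : Mat))ᵀ * M * (r γ : Mat) = (η γ : ℂ) • M)
    (N : Mat) (hNdet : N.det ≠ 0)
    (hNrel : ∀ γ, ((r γ : Mat))ᵀ * N * (r γ : Mat) = (1 : ℂ) • N) :
    Nonempty (r.range ≃* DihedralGroup 4) := by
  classical
  have hηval2 : ∀ γ : Γ, ((η γ : ℂ))^2 = 1 := by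
    intro γ
    have h := congrArg (Units.val) (hη2 γ)
    rw [Units.val_mul, Units.val_one] at h
    rw [sq]; exact h
  set χ : Γ → ℂ := fun γ => (η γ : ℂ) * ((r γ : Mat)).det with hχdef
  have hχsq : ∀ γ : Γ, (χ γ)^2 = 1 := by
    intro γ
    simp only [hχdef, mul_pow]
    rw [hηval2, hdet2, one_mul]
  have hdetmul : ∀ γ δ : Γ, ((r (γ*δ) : Mat)).det = ((r γ : Mat)).det * ((r δ : Mat)).det := by
    intro γ δ
    rw [_root_.map_mul r, Units.val_mul, Matrix.det_mul]
  have hχmul : ∀ γ δ : Γ, χ (γ*δ) = χ γ * χ δ := by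
    intro γ δ
    simp only [hχdef, _root_.map_mul, Units.val_mul, Matrix.det_mul]
    ring
  -- symmetrize M
  obtain ⟨γd, hγd⟩ := hdetne
  have hMc : M 0 1 - M 1 0 = 0 := by
    have h := skew_coeff M (r γd : Mat) (η γd : ℂ) (hMrel γd)
    by_contra hc
    apply hγd
    have h2 : (M 0 1 - M 1 0) * (((r γd : Mat)).det - (η γd : ℂ)) = 0 := by
      linear_combination h
    rcases mul_eq_zero.1 h2 with h3 | h3
    · exact absurd h3 hc
    · exact sub_eq_zero.1 h3
  have hMsym : Mᵀ = M := by
    have hse := skew_eq M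
    rw [hMc, zero_smul] at hse
    exact (sub_eq_zero.1 hse).symm
  -- γa with det = -1
  obtain ⟨γa, hγa⟩ := hdetnt
  have hdeta : ((r γa : Mat)).det = -1 := (pm1 (hdet2 γa)).resolve_left hγa
  -- symmetrize N
  have hNc : N 0 1 - N 1 0 = 0 := by
    have h := skew_coeff N (r γa : Mat) 1 (hNrel γa)
    rw [hdeta] at h
    linear_combination -h/2
  have hNsym : Nᵀ = N := by
    have hse := skew_eq N
    rw [hNc, zero_smul] at hse
    exact (sub_eq_zero.1 hse).symm
  -- normalized involutions
  obtain ⟨T, eT, heT, hTdef, hT2, hTtr⟩ := normalize M hMdet hMsym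
  obtain ⟨S, eS, heS, hSdef, hS2, hStr⟩ := normalize N hNdet hNsym
  -- intertwining relations
  have hTrel : ∀ γ : Γ, T * (r γ : Mat) = (χ γ) • ((r γ : Mat) * T) := by
    intro γ
    have h := intertwine M (r γ : Mat) (η γ : ℂ) (hdet2 γ) (hMrel γ)
    have lhs : T * (r γ : Mat)
        = (eT * ((η γ : ℂ) * ((r γ : Mat)).det)) • ((r γ : Mat) * (J*M)) := by
      rw [hTdef, Matrix.smul_mul, h, smul_smul]
    have rhs : (χ γ) • ((r γ : Mat) * T) = (χ γ * eT) • ((r γ : Mat) * (J*M)) := by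
      rw [hTdef, Matrix.mul_smul, smul_smul]
    rw [lhs, rhs]
    congr 1
    simp only [hχdef]
    ring
  have hSrel : ∀ γ : Γ, S * (r γ : Mat) = (((r γ : Mat)).det) • ((r γ : Mat) * S) := by
    intro γ
    have h := intertwine N (r γ : Mat) 1 (hdet2 γ) (hNrel γ)
    have lhs : S * (r γ : Mat)
        = (eS * (1 * ((r γ : Mat)).det)) • ((r γ : Mat) * (J*N)) := by
      rw [hSdef, Matrix.smul_mul, h, smul_smul]
    have rhs : (((r γ : Mat)).det) • ((r γ : Mat) * S)
        = (((r γ : Mat)).det * eS) • ((r γ : Mat) * (J*N)) := by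
      rw [hSdef, Matrix.mul_smul, smul_smul]
    rw [lhs, rhs]
    congr 1
    ring
  -- scalar cancellation against invertible matrices
  have hsmulR : ∀ (γ : Γ) (x y : ℂ),
      x • (r γ : Mat) = y • (r γ : Mat) → x = y := by
    intro γ x y h
    have hRi : (r γ : Mat) * (((r γ)⁻¹ : GL (Fin 2) ℂ) : Mat) = 1 := by
      rw [← Units.val_mul, mul_inv_cancel, Units.val_one]
    have h2 := congrArg (fun X : Mat => X * (((r γ)⁻¹ : GL (Fin 2) ℂ) : Mat)) h
    simp only [Matrix.smul_mul] at h2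
    rw [hRi] at h2
    exact smul_one_inj h2
  -- η = -1 somewhere
  obtain ⟨γe, hγe⟩ := hηnt
  have hηe : (η γe : ℂ) = -1 := by
    rcases pm1 (hηval2 γe) with h | h
    · exact absurd (Units.ext h) hγe
    · exact h
  -- anticommutation
  have hST : S*T = -(T*S) := by
    have hpol := polar S T
    rw [hStr, hTtr, zero_smul, zero_smul, zero_add, zero_add, mul_zero, sub_zero] at hpol
    have h1 : (S*T)*(r γe : Mat) = (η γe : ℂ) • ((r γe : Mat)*(S*T)) := by
      calc (S*T)*(r γe : Mat) = S*(T*(r γe : Mat)) := by rw [Matrix.mul_assoc]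
        _ = S*((χ γe) • ((r γe : Mat)*T)) := by rw [hTrel]
        _ = (χ γe) • (S*((r γe : Mat)*T)) := by rw [Matrix.mul_smul]
        _ = (χ γe) • ((S*(r γe : Mat))*T) := by rw [Matrix.mul_assoc]
        _ = (χ γe) • (((((r γe : Mat)).det) • ((r γe : Mat)*S))*T) := by rw [hSrel]
        _ = (χ γe * ((r γe : Mat)).det) • (((r γe : Mat)*S)*T) := by
              rw [Matrix.smul_mul, smul_smul]
        _ = (χ γe * ((r γe : Mat)).det) • ((r γe : Mat)*(S*T)) := by rw [Matrix.mul_assoc]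
        _ = (η γe : ℂ) • ((r γe : Mat)*(S*T)) := by
              congr 1
              simp only [hχdef]
              linear_combination (η γe : ℂ) * hdet2 γe
    have h2 : (T*S)*(r γe : Mat) = (η γe : ℂ) • ((r γe : Mat)*(T*S)) := by
      calc (T*S)*(r γe : Mat) = T*(S*(r γe : Mat)) := by rw [Matrix.mul_assoc]
        _ = T*((((r γe : Mat)).det) • ((r γe : Mat)*S)) := by rw [hSrel]
        _ = (((r γe : Mat)).det) • (T*((r γe : Mat)*S)) := by rw [Matrix.mul_smul]
        _ = (((r γe : Mat)).det) • ((T*(r γe : Mat))*S) := by rw [Matrix.mul_assoc]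
        _ = (((r γe : Mat)).det) • (((χ γe) • ((r γe : Mat)*T))*S) := by rw [hTrel]
        _ = (((r γe : Mat)).det * χ γe) • (((r γe : Mat)*T)*S) := by
              rw [Matrix.smul_mul, smul_smul]
        _ = (((r γe : Mat)).det * χ γe) • ((r γe : Mat)*(T*S)) := by rw [Matrix.mul_assoc]
        _ = (η γe : ℂ) • ((r γe : Mat)*(T*S)) := by
              congr 1
              simp only [hχdef]
              linear_combination (η γe : ℂ) * hdet2 γe
    have h3 : ((S*T).trace • (1:Mat))*(r γe : Mat)
        = (η γe : ℂ) • ((r γe : Mat)*((S*T).trace • (1:Mat))) := by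
      rw [← hpol, Matrix.add_mul, h1, h2, Matrix.mul_add, smul_add]
    rw [Matrix.smul_mul, one_mul, Matrix.mul_smul, mul_one, smul_smul] at h3
    have h4 : (S*T).trace = (η γe : ℂ) * (S*T).trace := hsmulR γe _ _ h3
    rw [hηe] at h4
    have h5 : (S*T).trace = 0 := by linear_combination h4/2
    rw [h5, zero_smul] at hpol
    exact eq_neg_of_add_eq_zero_left hpol
  -- determinants of S and T
  have hdetS : S.det = -1 := det_of_invol hS2 hStr
  have hdetT : T.det = -1 := det_of_invol hT2 hTtr
  -- χ at γd and γe
  have hχd : χ γd = -1 := by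
    rcases pm1 (hdet2 γd) with h1 | h1 <;> rcases pm1 (hηval2 γd) with h2 | h2
    · exact absurd (h1.trans h2.symm) hγd
    · simp only [hχdef]; rw [h1, h2]; ring
    · simp only [hχdef]; rw [h1, h2]; ring
    · exact absurd (h1.trans h2.symm) hγd
  have hχe : χ γe = -((r γe : Mat)).det := by
    simp only [hχdef]; rw [hηe]; ring
  -- pattern elements
  obtain ⟨γ₁, hd1, hc1⟩ : ∃ γ : Γ, ((r γ : Mat)).det = 1 ∧ χ γ = -1 := by
    rcases pm1 (hχsq γa) with hca | hca
    · rcases pm1 (hdet2 γd) with hdd | hdd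
      · exact ⟨γd, hdd, hχd⟩
      · refine ⟨γa*γd, ?_, ?_⟩
        · rw [hdetmul, hdeta, hdd]; ring
        · rw [hχmul, hca, hχd]; ring
    · rcases pm1 (hdet2 γe) with hde | hde
      · exact ⟨γe, hde, by rw [hχe, hde]⟩
      · refine ⟨γa*γe, ?_, ?_⟩
        · rw [hdetmul, hdeta, hde]; ring
        · rw [hχmul, hca, hχe, hde]; ring
  obtain ⟨γ₂, hd2, hc2⟩ : ∃ γ : Γ, ((r γ : Mat)).det = -1 ∧ χ γ = 1 := by
    rcases pm1 (hχsq γa) with hca | hca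
    · exact ⟨γa, hdeta, hca⟩
    · rcases pm1 (hdet2 γe) with hde | hde
      · refine ⟨γa*γe, ?_, ?_⟩
        · rw [hdetmul, hdeta, hde]; ring
        · rw [hχmul, hca, hχe, hde]; ring
      · exact ⟨γe, hde, by rw [hχe, hde]; ring⟩
  -- classification of r γ₁ and r γ₂
  have hA1comm : S*(r γ₁ : Mat) = (r γ₁ : Mat)*S := by
    have h := hSrel γ₁; rw [hd1, one_smul] at h; exact h
  have hA1anti : T*(r γ₁ : Mat) = -((r γ₁ : Mat)*T) := by
    have h := hTrel γ₁; rw [hc1, neg_smul, one_smul] at h; exact h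
  obtain ⟨μ, hμ⟩ := classify1m hS2 hT2 hST hStr hTtr (r γ₁ : Mat) hA1comm hA1anti
  have hμ2 : μ^2 = -1 := by
    have hd := hd1
    rw [hμ, Matrix.det_smul, hdetS] at hd
    simp only [Fintype.card_fin] at hd
    linear_combination -hd
  have hμ0 : μ ≠ 0 := by
    intro h; rw [h] at hμ2; norm_num at hμ2
  have hA2anti : S*(r γ₂ : Mat) = -((r γ₂ : Mat)*S) := by
    have h := hSrel γ₂; rw [hd2, neg_smul, one_smul] at h; exact h
  have hA2comm : T*(r γ₂ : Mat) = (r γ₂ : Mat)*T := by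
    have h := hTrel γ₂; rw [hc2, one_smul] at h; exact h
  obtain ⟨ν, hν⟩ := classifym1 hS2 hT2 hST hStr hTtr (r γ₂ : Mat) hA2anti hA2comm
  have hν2 : ν^2 = 1 := by
    have hd := hd2
    rw [hν, Matrix.det_smul, hdetT] at hd
    simp only [Fintype.card_fin] at hd
    linear_combination -hd
  have hν0 : ν ≠ 0 := by
    intro h; rw [h] at hν2; norm_num at hν2
  -- subgroup elements
  set a : r.range := ⟨r γ₁, ⟨γ₁, rfl⟩⟩ with hadef
  set b : r.range := ⟨r γ₂, ⟨γ₂, rfl⟩⟩ with hbdef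
  have hva : val2 r a = μ • S := hμ
  have hvb : val2 r b = ν • T := hν
  have hμμ : μ * μ = -1 := by rw [← sq]; exact hμ2
  have hνν : ν * ν = 1 := by rw [← sq]; exact hν2
  have hva2 : val2 r (a^2) = (-1 : ℂ) • 1 := by
    rw [val2_pow, hva, pow_two, Matrix.smul_mul, Matrix.mul_smul, smul_smul, hS2, hμμ]
  have hva3 : val2 r (a^3) = (-μ) • S := by
    rw [val2_pow, hva]
    have h2 : (μ•S)^2 = (-1:ℂ) • 1 := by
      rw [pow_two, Matrix.smul_mul, Matrix.mul_smul, smul_smul, hS2, hμμ]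
    calc (μ•S)^3 = (μ•S)^2 * (μ•S) := by rw [pow_succ]
      _ = ((-1:ℂ) • 1) * (μ•S) := by rw [h2]
      _ = (-μ) • S := by
          rw [Matrix.smul_mul, one_mul, smul_smul]
          congr 1; ring
  have hva4 : val2 r (a^4) = 1 := by
    have : a^4 = a^2 * a^2 := by rw [← pow_add]
    rw [this, val2_mul, hva2, Matrix.smul_mul, Matrix.mul_smul, smul_smul, one_mul]
    norm_num
  have ha4 : a^4 = 1 := val2_inj r (by rw [hva4, val2_one])
  have hvb2 : val2 r (b^2) = 1 := by
    rw [val2_pow, hvb, pow_two, Matrix.smul_mul, Matrix.mul_smul, smul_smul, hT2, hνν,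
      one_smul]
  have hb2 : b^2 = 1 := val2_inj r (by rw [hvb2, val2_one])
  have hbb : b*b = 1 := by rw [← pow_two]; exact hb2
  have hST' : T*S = -(S*T) := by rw [hST, neg_neg]
  have hab : a*b = b*a^3 := by
    apply val2_inj r
    rw [val2_mul, val2_mul, hva, hvb, hva3]
    calc (μ•S)*(ν•T) = (μ*ν) • (S*T) := by
          rw [Matrix.smul_mul, Matrix.mul_smul, smul_smul]
      _ = (ν•T)*((-μ)•S) := by
          rw [Matrix.smul_mul, Matrix.mul_smul, smul_smul, hST', smul_neg]
          rw [← neg_smul]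
          congr 1; ring
  -- powers modulo 4
  have hpmod : ∀ k : ℕ, a^k = a^(k % 4) := by
    intro k
    conv_lhs => rw [← Nat.div_add_mod k 4]
    rw [pow_add, pow_mul, ha4, one_pow, one_mul]
  have hmod : ∀ m n : ℕ, ((m : ZMod 4) = (n : ZMod 4)) → a^m = a^n := by
    intro m n h
    have hmn : m % 4 = n % 4 := (ZMod.natCast_eq_natCast_iff' m n 4).1 h
    rw [hpmod m, hpmod n, hmn]
  have hcollect : ∀ k : ℕ, a^k * b = b * a^(3*k) := by
    intro k; induction k with
    | zero => simp
    | succ n ih =>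
      calc a^(n+1)*b = (a*a^n)*b := by rw [pow_succ']
        _ = a*(a^n*b) := by rw [mul_assoc]
        _ = a*(b*a^(3*n)) := by rw [ih]
        _ = (a*b)*a^(3*n) := by rw [mul_assoc]
        _ = (b*a^3)*a^(3*n) := by rw [hab]
        _ = b*(a^3*a^(3*n)) := by rw [mul_assoc]
        _ = b*a^(3+3*n) := by rw [← pow_add]
        _ = b*a^(3*(n+1)) := by rw [show 3+3*n = 3*(n+1) by ring]
  -- distinctness helpers
  have hSne1 : ∀ c d : ℂ, c ≠ 0 → c•S ≠ d•(1:Mat) := by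
    intro c d hc h
    apply S_ne_smul_one hS2 hT2 hST (c⁻¹*d)
    calc S = c⁻¹•(c•S) := by rw [smul_smul, inv_mul_cancel₀ hc, one_smul]
      _ = c⁻¹•(d•(1:Mat)) := by rw [h]
      _ = (c⁻¹*d)•(1:Mat) := by rw [smul_smul]
  have hTne1 : ∀ c d : ℂ, c ≠ 0 → c•T ≠ d•(1:Mat) := by
    intro c d hc h
    apply T_ne_smul_one hS2 hT2 hST (c⁻¹*d)
    calc T = c⁻¹•(c•T) := by rw [smul_smul, inv_mul_cancel₀ hc, one_smul]
      _ = c⁻¹•(d•(1:Mat)) := by rw [h]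
      _ = (c⁻¹*d)•(1:Mat) := by rw [smul_smul]
  have hTneS : ∀ c d : ℂ, c ≠ 0 → c•T ≠ d•S := by
    intro c d hc h
    apply S_ne_smul_T hT2 hS2 hST' (c⁻¹*d)
    calc T = c⁻¹•(c•T) := by rw [smul_smul, inv_mul_cancel₀ hc, one_smul]
      _ = c⁻¹•(d•S) := by rw [h]
      _ = (c⁻¹*d)•S := by rw [smul_smul]
  -- casting helper
  have hcast : ∀ i : ZMod 4, ((i.val : ℕ) : ZMod 4) = i := fun i => ZMod.natCast_rightInverse i
  -- the homomorphism
  let f : DihedralGroup 4 → r.range := fun x =>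
    match x with
    | DihedralGroup.r i => a ^ i.val
    | DihedralGroup.sr i => b * a ^ i.val
  have hfmul : ∀ x y : DihedralGroup 4, f (x*y) = f x * f y := by
    rintro (i|i) (j|j)
    · show a^((i+j).val) = a^(i.val) * a^(j.val)
      rw [← pow_add]
      exact hmod _ _ (by rw [hcast, Nat.cast_add, hcast, hcast])
    · show b*a^((j-i).val) = a^(i.val)*(b*a^(j.val))
      rw [← mul_assoc, hcollect i.val, mul_assoc, ← pow_add]
      congr 1
      apply hmod
      rw [hcast]
      push_cast [hcast]
      rw [show (3:ZMod 4) = -1 by decide]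
      ring
    · show b*a^((i+j).val) = (b*a^(i.val))*a^(j.val)
      rw [mul_assoc, ← pow_add]
      congr 1
      exact hmod _ _ (by rw [hcast, Nat.cast_add, hcast, hcast])
    · show a^((j-i).val) = (b*a^(i.val))*(b*a^(j.val))
      have hstep : (b*a^(i.val))*(b*a^(j.val)) = a^(3*i.val + j.val) := by
        calc (b*a^(i.val))*(b*a^(j.val))
            = b*(a^(i.val)*(b*a^(j.val))) := by rw [mul_assoc]
          _ = b*((a^(i.val)*b)*a^(j.val)) := by
              rw [← mul_assoc (a^(i.val)) b (a^(j.val))]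
          _ = b*((b*a^(3*i.val))*a^(j.val)) := by rw [hcollect]
          _ = b*(b*(a^(3*i.val)*a^(j.val))) := by
              rw [mul_assoc b (a^(3*i.val)) (a^(j.val))]
          _ = (b*b)*(a^(3*i.val)*a^(j.val)) := by rw [← mul_assoc]
          _ = a^(3*i.val + j.val) := by rw [hbb, one_mul, pow_add]
      rw [hstep]
      apply hmod
      rw [hcast]
      push_cast [hcast]
      rw [show (3:ZMod 4) = -1 by decide]
      ring
  -- injectivity ingredients
  have hKnot : ∀ k : ZMod 4, k ≠ 0 → a^(k.val) ≠ 1 := by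
    intro k hk h1
    rcases (by decide : ∀ k : ZMod 4, k ≠ 0 → k = 1 ∨ k = 2 ∨ k = 3) k hk with rfl|rfl|rfl
    · rw [show ((1:ZMod 4)).val = 1 by decide, pow_one] at h1
      have hv := congrArg (val2 r) h1
      rw [hva, val2_one] at hv
      exact hSne1 μ 1 hμ0 (by rw [one_smul]; exact hv)
    · rw [show ((2:ZMod 4)).val = 2 by decide] at h1
      have hv := congrArg (val2 r) h1
      rw [hva2, val2_one] at hv
      have := smul_one_inj (by rw [hv, one_smul] : ((-1:ℂ)) • (1:Mat) = (1:ℂ) • 1)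
      norm_num at this
    · rw [show ((3:ZMod 4)).val = 3 by decide] at h1
      have hv := congrArg (val2 r) h1
      rw [hva3, val2_one] at hv
      exact hSne1 (-μ) 1 (neg_ne_zero.2 hμ0) (by rw [one_smul]; exact hv)
  have hbnot : ∀ k : ZMod 4, b ≠ a^(k.val) := by
    intro k h
    have hv := congrArg (val2 r) h
    rw [hvb] at hv
    rcases (by decide : ∀ k : ZMod 4, k = 0 ∨ k = 1 ∨ k = 2 ∨ k = 3) k with rfl|rfl|rfl|rfl
    · rw [show ((0:ZMod 4)).val = 0 by decide, pow_zero, val2_one] at hv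
      exact hTne1 ν 1 hν0 (by rw [one_smul]; exact hv)
    · rw [show ((1:ZMod 4)).val = 1 by decide, pow_one, hva] at hv
      exact hTneS ν μ hν0 hv
    · rw [show ((2:ZMod 4)).val = 2 by decide, hva2] at hv
      exact hTne1 ν (-1) hν0 hv
    · rw [show ((3:ZMod 4)).val = 3 by decide, hva3] at hv
      exact hTneS ν (-μ) hν0 hv
  have hsplit : ∀ i j : ZMod 4, a^((i-j).val) * a^(j.val) = a^(i.val) := by
    intro i j
    rw [← pow_add]
    exact hmod _ _ (by rw [Nat.cast_add, hcast, hcast, hcast]; ring)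
  have hdiffpow : ∀ i j : ZMod 4, a^(i.val) = a^(j.val) → i = j := by
    intro i j h
    by_contra hij
    have e2 : a^((i-j).val) * a^(j.val) = 1 * a^(j.val) := by
      rw [hsplit, h, one_mul]
    exact hKnot (i-j) (sub_ne_zero.2 hij) (mul_right_cancel e2)
  have hbpow : ∀ i j : ZMod 4, a^(i.val) = b * a^(j.val) → False := by
    intro i j h
    apply hbnot (i-j)
    rw [← hsplit i j] at h
    exact (mul_right_cancel h).symm
  have hinj : Function.Injective f := by
    rintro (i|i) (j|j) h
    · exact congrArg DihedralGroup.r (hdiffpow i j h)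
    · exact (hbpow i j h).elim
    · exact (hbpow j i h.symm).elim
    · have h' : a^(i.val) = a^(j.val) := mul_left_cancel h
      exact congrArg DihedralGroup.sr (hdiffpow i j h')
  -- surjectivity
  have hdetST : (S*T).det = 1 := by
    rw [Matrix.det_mul, hdetS, hdetT]; ring
  have hvb2m : val2 r (b*a^2) = (-ν)•T := by
    rw [val2_mul, hvb, hva2, Matrix.mul_smul, mul_one, smul_smul]
    congr 1; ring
  have hvb1m : val2 r (b*a^1) = (-(ν*μ))•(S*T) := by
    rw [val2_mul, hvb, pow_one, hva]
    rw [Matrix.smul_mul, Matrix.mul_smul, smul_smul, hST', smul_neg, ← neg_smul]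
  have hvb3m : val2 r (b*a^3) = (ν*μ)•(S*T) := by
    rw [val2_mul, hvb, hva3]
    rw [Matrix.smul_mul, Matrix.mul_smul, smul_smul, hST', smul_neg, ← neg_smul]
    congr 1; ring
  have hsurj : Function.Surjective f := by
    intro x
    obtain ⟨γ, hγ⟩ := MonoidHom.mem_range.1 x.2
    have hRx : (r γ : Mat) = val2 r x := congrArg Units.val hγ
    rcases pm1 (hdet2 γ) with hd | hd <;> rcases pm1 (hχsq γ) with hc | hc
    · -- pattern (1,1)
      have hcS : S*(r γ : Mat) = (r γ : Mat)*S := by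
        have h := hSrel γ; rw [hd, one_smul] at h; exact h
      have hcT : T*(r γ : Mat) = (r γ : Mat)*T := by
        have h := hTrel γ; rw [hc, one_smul] at h; exact h
      have hsc := scalar_of_commutes hS2 hT2 hST hStr hTtr (r γ : Mat) hcS hcT
      have hκ2 : (((r γ : Mat)).trace/2)^2 = 1 := by
        have hdd := hd
        rw [hsc, Matrix.det_smul, Matrix.det_one] at hdd
        simpa [Fintype.card_fin] using hdd
      rcases pm1 hκ2 with hκ | hκ
      · refine ⟨DihedralGroup.r 0, val2_inj r ?_⟩
        show val2 r (a ^ (0:ZMod 4).val) = val2 r x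
        rw [show ((0:ZMod 4)).val = 0 by decide, pow_zero, val2_one, ← hRx, hsc, hκ, one_smul]
      · refine ⟨DihedralGroup.r 2, val2_inj r ?_⟩
        show val2 r (a ^ (2:ZMod 4).val) = val2 r x
        rw [show ((2:ZMod 4)).val = 2 by decide, hva2, ← hRx, hsc, hκ]
    · -- pattern (1,-1)
      have hcS : S*(r γ : Mat) = (r γ : Mat)*S := by
        have h := hSrel γ; rw [hd, one_smul] at h; exact h
      have haT : T*(r γ : Mat) = -((r γ : Mat)*T) := by
        have h := hTrel γ; rw [hc, neg_smul, one_smul] at h; exact h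
      obtain ⟨κ, hκ⟩ := classify1m hS2 hT2 hST hStr hTtr (r γ : Mat) hcS haT
      have hκ2 : κ^2 = -1 := by
        rw [hκ, Matrix.det_smul, hdetS] at hd
        simp only [Fintype.card_fin] at hd
        linear_combination -hd
      rcases pmI hμ2 with hμI | hμI <;> rcases pmI hκ2 with hκI | hκI
      · refine ⟨DihedralGroup.r 1, val2_inj r ?_⟩
        show val2 r (a ^ (1:ZMod 4).val) = val2 r x
        rw [show ((1:ZMod 4)).val = 1 by decide, pow_one, hva, ← hRx, hκ]
        congr 1; rw [hμI, hκI]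
      · refine ⟨DihedralGroup.r 3, val2_inj r ?_⟩
        show val2 r (a ^ (3:ZMod 4).val) = val2 r x
        rw [show ((3:ZMod 4)).val = 3 by decide, hva3, ← hRx, hκ]
        congr 1; rw [hμI, hκI]; try ring
      · refine ⟨DihedralGroup.r 3, val2_inj r ?_⟩
        show val2 r (a ^ (3:ZMod 4).val) = val2 r x
        rw [show ((3:ZMod 4)).val = 3 by decide, hva3, ← hRx, hκ]
        congr 1; rw [hμI, hκI]; try ring
      · refine ⟨DihedralGroup.r 1, val2_inj r ?_⟩
        show val2 r (a ^ (1:ZMod 4).val) = val2 r x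
        rw [show ((1:ZMod 4)).val = 1 by decide, pow_one, hva, ← hRx, hκ]
        congr 1; rw [hμI, hκI]
    · -- pattern (-1,1)
      have haS : S*(r γ : Mat) = -((r γ : Mat)*S) := by
        have h := hSrel γ; rw [hd, neg_smul, one_smul] at h; exact h
      have hcT : T*(r γ : Mat) = (r γ : Mat)*T := by
        have h := hTrel γ; rw [hc, one_smul] at h; exact h
      obtain ⟨κ, hκ⟩ := classifym1 hS2 hT2 hST hStr hTtr (r γ : Mat) haS hcT
      have hκ2 : κ^2 = 1 := by
        rw [hκ, Matrix.det_smul, hdetT] at hd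
        simp only [Fintype.card_fin] at hd
        linear_combination -hd
      rcases pm1 hν2 with hνI | hνI <;> rcases pm1 hκ2 with hκI | hκI
      · refine ⟨DihedralGroup.sr 0, val2_inj r ?_⟩
        show val2 r (b * a ^ (0:ZMod 4).val) = val2 r x
        rw [show ((0:ZMod 4)).val = 0 by decide, pow_zero, mul_one, hvb, ← hRx, hκ]
        congr 1; rw [hνI, hκI]
      · refine ⟨DihedralGroup.sr 2, val2_inj r ?_⟩
        show val2 r (b * a ^ (2:ZMod 4).val) = val2 r x
        rw [show ((2:ZMod 4)).val = 2 by decide, hvb2m, ← hRx, hκ]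
        congr 1; rw [hνI, hκI]; try ring
      · refine ⟨DihedralGroup.sr 2, val2_inj r ?_⟩
        show val2 r (b * a ^ (2:ZMod 4).val) = val2 r x
        rw [show ((2:ZMod 4)).val = 2 by decide, hvb2m, ← hRx, hκ]
        congr 1; rw [hνI, hκI]; try ring
      · refine ⟨DihedralGroup.sr 0, val2_inj r ?_⟩
        show val2 r (b * a ^ (0:ZMod 4).val) = val2 r x
        rw [show ((0:ZMod 4)).val = 0 by decide, pow_zero, mul_one, hvb, ← hRx, hκ]
        congr 1; rw [hνI, hκI]
    · -- pattern (-1,-1)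
      have haS : S*(r γ : Mat) = -((r γ : Mat)*S) := by
        have h := hSrel γ; rw [hd, neg_smul, one_smul] at h; exact h
      have haT : T*(r γ : Mat) = -((r γ : Mat)*T) := by
        have h := hTrel γ; rw [hc, neg_smul, one_smul] at h; exact h
      obtain ⟨κ, hκ⟩ := classifymm hS2 hT2 hST hStr hTtr (r γ : Mat) haS haT
      have hκ2 : κ^2 = -1 := by
        rw [hκ, Matrix.det_smul, hdetST] at hd
        simp only [Fintype.card_fin] at hd
        linear_combination hd
      have hw2 : (ν*μ)^2 = -1 := by rw [mul_pow, hν2, hμ2]; ring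
      rcases pmI hw2 with hwI | hwI <;> rcases pmI hκ2 with hκI | hκI
      · refine ⟨DihedralGroup.sr 3, val2_inj r ?_⟩
        show val2 r (b * a ^ (3:ZMod 4).val) = val2 r x
        rw [show ((3:ZMod 4)).val = 3 by decide, hvb3m, ← hRx, hκ]
        congr 1; rw [hwI, hκI]
      · refine ⟨DihedralGroup.sr 1, val2_inj r ?_⟩
        show val2 r (b * a ^ (1:ZMod 4).val) = val2 r x
        rw [show ((1:ZMod 4)).val = 1 by decide, hvb1m, ← hRx, hκ]
        congr 1; rw [hwI, hκI]; try ring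
      · refine ⟨DihedralGroup.sr 1, val2_inj r ?_⟩
        show val2 r (b * a ^ (1:ZMod 4).val) = val2 r x
        rw [show ((1:ZMod 4)).val = 1 by decide, hvb1m, ← hRx, hκ]
        congr 1; rw [hwI, hκI]; try ring
      · refine ⟨DihedralGroup.sr 3, val2_inj r ?_⟩
        show val2 r (b * a ^ (3:ZMod 4).val) = val2 r x
        rw [show ((3:ZMod 4)).val = 3 by decide, hvb3m, ← hRx, hκ]
        congr 1; rw [hwI, hκI]
  exact ⟨(MulEquiv.ofBijective (MonoidHom.mk' f hfmul) ⟨hinj, hsurj⟩).symm⟩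



end fwd

end
end SDAux

/-- Let `r` be a 2-dimensional complex representation with an `η`-similitude form, where
`det∘r` and `η` are distinct characters of order 2.  Then `r` is self-dual (carries a
nondegenerate invariant bilinear form) if and only if its image is isomorphic to the
dihedral group of order 8. -/
theorem selfdual_iff_image_dihedral
    {Γ : Type*} [Group Γ] (r : Γ →* GL (Fin 2) ℂ) (η : Γ →* ℂˣ)
    (hdet : ∃ γ : Γ, (r γ : Matrix (Fin 2) (Fin 2) ℂ).det ≠ (η γ : ℂ))
    (hform : ∃ B, IsSimForm r η B)
    (hdet_ord : (∃ γ : Γ, (r γ : Matrix (Fin 2) (Fin 2) ℂ).det ≠ 1) ∧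
      (∀ γ : Γ, (r γ : Matrix (Fin 2) (Fin 2) ℂ).det ^ 2 = 1))
    (hη_ord : (∃ γ : Γ, η γ ≠ 1) ∧ (∀ γ : Γ, η γ * η γ = 1)) :
    (∃ B, IsSimForm r (1 : Γ →* ℂˣ) B) ↔
      Nonempty (r.range ≃* DihedralGroup 4) := by
  constructor
  · rintro ⟨B₀, hB₀⟩
    obtain ⟨Bη, hBη⟩ := hform
    obtain ⟨M, hMdet, hMrel⟩ := SDAux.exists_matrix_of_form r η Bη hBη
    obtain ⟨N, hNdet, hNrel'⟩ := SDAux.exists_matrix_of_form r 1 B₀ hB₀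
    have hNrel : ∀ γ : Γ,
        ((r γ : Matrix (Fin 2) (Fin 2) ℂ))ᵀ * N * (r γ : Matrix (Fin 2) (Fin 2) ℂ)
          = (1:ℂ) • N := fun γ => by simpa using hNrel' γ
    exact SDAux.forward r η hdet hdet_ord.2 hdet_ord.1 hη_ord.1 hη_ord.2
      M hMdet hMrel N hNdet hNrel
  · rintro ⟨e⟩
    obtain ⟨N, hNdet, hNrel⟩ := SDAux.dihedral_invariant_form r e
    exact SDAux.form_of_matrix r N hNdet hNrel
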